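/- arXiv:2510.15734 — 2 statements merged into one kernel-verified Lean document; each statement's English description precedes it below -/
import Mathlib

section
/- Let f : ℝ^n → ℝ be convex and differentiable with L-Lipschitz continuous gradient (L > 0), and let x* be a global minimizer of f. If x⁺ = x − (1/L)∇f(x), then f(x⁺) ≤ f(x*) + (L/2)(‖x − x*‖² − ‖x⁺ − x*‖²). -/
open RealInnerProductSpace

lemma descent_lemma
    (n : ℕ) (f : EuclideanSpace ℝ (Fin n) → ℝ)
    (f' : EuclideanSpace ℝ (Fin n) → EuclideanSpace ℝ (Fin n))
    (L : ℝ)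
    (hdiff : ∀ x, HasGradientAt f (f' x) x)
    (hlip : ∀ x y, ‖f' x - f' y‖ ≤ L * ‖x - y‖)
    (x v : EuclideanSpace ℝ (Fin n)) :
    f (x + v) ≤ f x + ⟪f' x, v⟫ + L / 2 * ‖v‖ ^ 2 := by
  have hg : ∀ t : ℝ, HasDerivAt (fun t : ℝ => f (x + t • v)) ⟪f' (x + t • v), v⟫ t := by
    intro t
    have h1 : HasDerivAt (fun t : ℝ => x + t • v) v t := by
      simpa using ((hasDerivAt_id t).smul_const v).const_add x
    have h2 := ((hdiff (x + t • v)).hasFDerivAt).comp_hasDerivAt t h1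
    simp [InnerProductSpace.toDual] at h2
    exact h2
  set ψ : ℝ → ℝ := fun t => L / 2 * ‖v‖ ^ 2 * t ^ 2 + ⟪f' x, v⟫ * t + f x - f (x + t • v)
    with hψ
  have hψd : ∀ t : ℝ, HasDerivAt ψ
      (L * ‖v‖ ^ 2 * t + ⟪f' x, v⟫ - ⟪f' (x + t • v), v⟫) t := by
    intro t
    have h3 : HasDerivAt (fun t : ℝ => L / 2 * ‖v‖ ^ 2 * t ^ 2 + ⟪f' x, v⟫ * t + f x)
        (L * ‖v‖ ^ 2 * t + ⟪f' x, v⟫) t := by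
      have := (((hasDerivAt_pow 2 t).const_mul (L / 2 * ‖v‖ ^ 2)).add
        ((hasDerivAt_id t).const_mul ⟪f' x, v⟫)).add_const (f x)
      refine this.congr_deriv ?_
      ring
    exact h3.sub (hg t)
  have hmono : MonotoneOn ψ (Set.Icc (0:ℝ) 1) := by
    apply monotoneOn_of_deriv_nonneg (convex_Icc 0 1)
    · exact fun t _ => (hψd t).continuousAt.continuousWithinAt
    · exact fun t _ => ((hψd t).differentiableAt).differentiableWithinAt
    · intro t ht
      rw [interior_Icc] at ht
      rw [(hψd t).deriv]
      have hb : ⟪f' (x + t • v), v⟫ - ⟪f' x, v⟫ ≤ L * ‖v‖ ^ 2 * t := by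
        have h4 : ⟪f' (x + t • v) - f' x, v⟫ ≤ ‖f' (x + t • v) - f' x‖ * ‖v‖ :=
          real_inner_le_norm _ _
        have h5 : ‖f' (x + t • v) - f' x‖ ≤ L * ‖t • v‖ := by
          simpa using hlip (x + t • v) x
        have h6 : ‖t • v‖ = t * ‖v‖ := by
          rw [norm_smul, Real.norm_eq_abs, abs_of_pos ht.1]
        rw [inner_sub_left] at h4
        have hv : (0:ℝ) ≤ ‖v‖ := norm_nonneg v
        have h7 : ‖f' (x + t • v) - f' x‖ * ‖v‖ ≤ L * ‖t • v‖ * ‖v‖ :=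
          mul_le_mul_of_nonneg_right h5 hv
        rw [h6] at h7
        nlinarith [h4, h7]
      linarith
  have h01 : ψ 0 ≤ ψ 1 := hmono (Set.left_mem_Icc.2 zero_le_one)
    (Set.right_mem_Icc.2 zero_le_one) zero_le_one
  have e0 : ψ 0 = 0 := by simp [hψ]
  have e1 : ψ 1 = L / 2 * ‖v‖ ^ 2 + ⟪f' x, v⟫ + f x - f (x + v) := by
    simp only [hψ, one_pow, mul_one, one_smul]
  rw [e0, e1] at h01
  linarith [h01]

theorem gradient_step_convex_bound
    (n : ℕ) (f : EuclideanSpace ℝ (Fin n) → ℝ)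
    (f' : EuclideanSpace ℝ (Fin n) → EuclideanSpace ℝ (Fin n))
    (L : ℝ) (hL : 0 < L)
    (hdiff : ∀ x, HasGradientAt f (f' x) x)
    (hlip : ∀ x y, ‖f' x - f' y‖ ≤ L * ‖x - y‖)
    (hconvex : ∀ x s, f x + ⟪f' x, s⟫ ≤ f (x + s))
    (xstar : EuclideanSpace ℝ (Fin n)) (hmin : ∀ x, f xstar ≤ f x)
    (x xplus : EuclideanSpace ℝ (Fin n))
    (hstep : xplus = x - (1 / L) • f' x) :
    f xplus ≤ f xstar + L / 2 * (‖x - xstar‖ ^ 2 - ‖xplus - xstar‖ ^ 2) := by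
  set g := f' x with hg
  have hv : xplus = x + (-(1 / L)) • g := by
    rw [hstep]; module
  have hd : f xplus ≤ f x + ⟪g, (-(1 / L)) • g⟫ + L / 2 * ‖(-(1 / L)) • g‖ ^ 2 := by
    rw [hv]; exact descent_lemma n f f' L hdiff hlip x _
  have hc : f x ≤ f xstar + ⟪g, x - xstar⟫ := by
    have := hconvex x (xstar - x)
    have hx : x + (xstar - x) = xstar := by abel
    rw [hx] at this
    have hi : ⟪g, xstar - x⟫ = -⟪g, x - xstar⟫ := by
      rw [← inner_neg_right]; congr 1; abel
    linarith [this, hi.ge, hi.le]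
  have hnorm : ‖xplus - xstar‖ ^ 2
      = ‖x - xstar‖ ^ 2 - 2 * (1 / L) * ⟪x - xstar, g⟫ + (1 / L) ^ 2 * ‖g‖ ^ 2 := by
    have : xplus - xstar = (x - xstar) - (1 / L) • g := by rw [hstep]; abel
    rw [this, norm_sub_sq_real, real_inner_smul_right, norm_smul]
    have : |1 / L| = 1 / L := abs_of_pos (by positivity)
    rw [Real.norm_eq_abs, this]
    ring
  have h1 : ⟪g, (-(1 / L)) • g⟫ = -(1 / L) * ‖g‖ ^ 2 := by
    rw [real_inner_smul_right, real_inner_self_eq_norm_sq]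
  have h2 : ‖(-(1 / L)) • g‖ ^ 2 = (1 / L) ^ 2 * ‖g‖ ^ 2 := by
    rw [norm_smul, Real.norm_eq_abs, mul_pow, sq_abs, neg_pow]
    ring
  have hsym : ⟪x - xstar, g⟫ = ⟪g, x - xstar⟫ := real_inner_comm _ _
  have hLne : L ≠ 0 := ne_of_gt hL
  rw [h1, h2] at hd
  rw [hnorm]
  have hkey : L / 2 * (‖x - xstar‖ ^ 2 -
      (‖x - xstar‖ ^ 2 - 2 * (1 / L) * ⟪x - xstar, g⟫ + (1 / L) ^ 2 * ‖g‖ ^ 2))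
      = -(1 / L) * ‖g‖ ^ 2 + L / 2 * ((1 / L) ^ 2 * ‖g‖ ^ 2) + ⟪x - xstar, g⟫ := by
    field_simp
    ring
  rw [hkey, hsym]
  linarith [hd, hc]
end

section
/- Let H be a real symmetric positive semidefinite n×n matrix and g ∈ ℝ^n, and define f(x) = (1/2)xᵀHx + gᵀx. Then f attains a global minimum on ℝ^n if and only if gᵀs = 0 for every s ∈ ℝ^n with Hs = 0 (equivalently, for every s with sᵀHs = 0); and if this condition fails, f is unbounded below. -/
open Matrix
open scoped RealInnerProductSpace

private lemma cross_symm {n : ℕ} {H : Matrix (Fin n) (Fin n) ℝ} (hH : H.IsSymm)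
    (x y : Fin n → ℝ) : x ⬝ᵥ H *ᵥ y = y ⬝ᵥ H *ᵥ x := by
  rw [Matrix.dotProduct_mulVec, ← Matrix.mulVec_transpose, hH, dotProduct_comm]

private lemma psd_ker {n : ℕ} {H : Matrix (Fin n) (Fin n) ℝ} (hH : H.IsSymm)
    (hpsd : ∀ x : Fin n → ℝ, 0 ≤ x ⬝ᵥ H.mulVec x) {s : Fin n → ℝ}
    (hs : s ⬝ᵥ H *ᵥ s = 0) : H *ᵥ s = 0 := by
  have key : ∀ x : Fin n → ℝ, x ⬝ᵥ H *ᵥ s = 0 := by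
    intro x
    set a := x ⬝ᵥ H *ᵥ s with ha
    set b := x ⬝ᵥ H *ᵥ x with hb
    have hb0 : 0 ≤ b := hpsd x
    have hq : ∀ t : ℝ, 0 ≤ 2 * t * a + t ^ 2 * b := by
      intro t
      have h0 := hpsd (s + t • x)
      have expand : (s + t • x) ⬝ᵥ H *ᵥ (s + t • x)
          = s ⬝ᵥ H *ᵥ s + 2 * t * a + t ^ 2 * b := by
        simp only [Matrix.mulVec_add, Matrix.mulVec_smul, add_dotProduct,
          smul_dotProduct, dotProduct_add, dotProduct_smul,
          smul_eq_mul, ha, hb]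
        rw [cross_symm hH x s]
        ring
      rw [expand, hs, zero_add] at h0
      exact h0
    rcases eq_or_lt_of_le hb0 with hbe | hbl
    · have := hq (-a)
      nlinarith [sq_nonneg a]
    · have hq' := hq (-a / b)
      have hb' : b ≠ 0 := ne_of_gt hbl
      have e : 2 * (-a / b) * a + (-a / b) ^ 2 * b = -(a ^ 2) / b := by
        field_simp; ring
      rw [e] at hq'
      have h4 : 0 ≤ -(a ^ 2) := by
        have := mul_nonneg hq' (le_of_lt hbl)
        rwa [div_mul_cancel₀ _ hb'] at this
      nlinarith [sq_nonneg a]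
  apply dotProduct_eq_zero
  intro w
  rw [dotProduct_comm]
  exact key w

private lemma psd_mem_range {n : ℕ} {H : Matrix (Fin n) (Fin n) ℝ} (hH : H.IsSymm)
    (hpsd : ∀ x : Fin n → ℝ, 0 ≤ x ⬝ᵥ H.mulVec x) {g : Fin n → ℝ}
    (h : ∀ s : Fin n → ℝ, H.mulVec s = 0 → g ⬝ᵥ s = 0) : ∃ x, H *ᵥ x = g := by
  classical
  let K : Submodule ℝ (EuclideanSpace ℝ (Fin n)) :=
    LinearMap.range (Matrix.toEuclideanLin H)
  have inner_eq : ∀ x y : EuclideanSpace ℝ (Fin n),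
      ⟪x, y⟫ = dotProduct (WithLp.ofLp x) (WithLp.ofLp y) := fun x y => by
      simp [PiLp.inner_apply, dotProduct, mul_comm]
  obtain ⟨g1, hg1, g2, hg2, hsum⟩ :=
    K.exists_add_mem_mem_orthogonal (WithLp.toLp 2 g)
  have hker : H *ᵥ (WithLp.ofLp g2) = 0 := by
    apply psd_ker hH hpsd
    have hmem : (WithLp.toLp 2 (H *ᵥ (WithLp.ofLp g2)) : EuclideanSpace ℝ (Fin n)) ∈ K :=
      ⟨g2, rfl⟩
    have h0 : ⟪(WithLp.toLp 2 (H *ᵥ (WithLp.ofLp g2)) : EuclideanSpace ℝ (Fin n)), g2⟫ = 0 :=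
      (Submodule.mem_orthogonal K g2).mp hg2 _ hmem
    rw [inner_eq] at h0
    rw [dotProduct_comm] at h0
    exact h0
  have h1 : g ⬝ᵥ (WithLp.ofLp g2) = 0 := h _ hker
  have h2 : ⟪g1, g2⟫ = 0 := (Submodule.mem_orthogonal K g2).mp hg2 _ hg1
  have h3 : ⟪g2, g2⟫ = 0 := by
    have hh : ⟪(WithLp.toLp 2 g : EuclideanSpace ℝ (Fin n)), g2⟫ = ⟪g1, g2⟫ + ⟪g2, g2⟫ := by
      rw [hsum, inner_add_left]
    rw [h2, zero_add] at hh
    rw [← hh, inner_eq]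
    exact h1
  have hg2z : g2 = 0 := inner_self_eq_zero.mp h3
  rw [hg2z, add_zero] at hsum
  obtain ⟨x, hx⟩ := hg1
  exact ⟨WithLp.ofLp x, congrArg WithLp.ofLp (hx.trans hsum.symm)⟩

theorem quadratic_psd_minimum_iff
    (n : ℕ) (H : Matrix (Fin n) (Fin n) ℝ) (hH : H.IsSymm)
    (hpsd : ∀ x : Fin n → ℝ, 0 ≤ x ⬝ᵥ H.mulVec x)
    (g : Fin n → ℝ)
    (f : (Fin n → ℝ) → ℝ)
    (hf : ∀ x, f x = 1 / 2 * (x ⬝ᵥ H.mulVec x) + g ⬝ᵥ x) :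
    ((∃ xstar : Fin n → ℝ, ∀ x, f xstar ≤ f x) ↔
      (∀ s : Fin n → ℝ, H.mulVec s = 0 → g ⬝ᵥ s = 0)) ∧
    (¬ (∀ s : Fin n → ℝ, H.mulVec s = 0 → g ⬝ᵥ s = 0) →
      ∀ M : ℝ, ∃ x : Fin n → ℝ, f x < M) := by
  constructor
  · constructor
    · rintro ⟨xstar, hmin⟩ s hs
      have hline : ∀ t : ℝ, f (xstar + t • s) = f xstar + t * (g ⬝ᵥ s) := by
        intro t
        rw [hf, hf]
        have hquad : (xstar + t • s) ⬝ᵥ H *ᵥ (xstar + t • s) = xstar ⬝ᵥ H *ᵥ xstar := by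
          rw [Matrix.mulVec_add, Matrix.mulVec_smul, hs, smul_zero, add_zero,
            add_dotProduct, smul_dotProduct, cross_symm hH s xstar,
            hs]
          simp
        rw [hquad, dotProduct_add, dotProduct_smul, smul_eq_mul]
        ring
      have key := fun t : ℝ => hmin (xstar + t • s)
      have h0 : ∀ t : ℝ, 0 ≤ t * (g ⬝ᵥ s) := by
        intro t
        have := key t
        rw [hline t] at this
        linarith
      have := h0 (-(g ⬝ᵥ s))
      nlinarith [sq_nonneg (g ⬝ᵥ s)]
    · intro h
      obtain ⟨x0, hx0⟩ := psd_mem_range hH hpsd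
        (g := -g) (fun s hs => by rw [neg_dotProduct, h s hs, neg_zero])
      refine ⟨x0, fun x => ?_⟩
      have hd := hpsd (x - x0)
      have e1 : (x - x0) ⬝ᵥ H *ᵥ (x - x0)
          = x ⬝ᵥ H *ᵥ x - 2 * (x0 ⬝ᵥ H *ᵥ x) + x0 ⬝ᵥ H *ᵥ x0 := by
        simp only [Matrix.mulVec_sub, sub_dotProduct, dotProduct_sub]
        rw [cross_symm hH x x0]
        ring
      have hg : ∀ y : Fin n → ℝ, g ⬝ᵥ y = -(x0 ⬝ᵥ H *ᵥ y) := by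
        intro y
        have h1 : (H *ᵥ x0) ⬝ᵥ y = -(g ⬝ᵥ y) := by rw [hx0, neg_dotProduct]
        have h2 : (H *ᵥ x0) ⬝ᵥ y = x0 ⬝ᵥ H *ᵥ y := by
          rw [dotProduct_comm, cross_symm hH y x0]
        linarith
      rw [hf, hf, hg x, hg x0]
      rw [e1] at hd
      linarith
  · intro h M
    push_neg at h
    obtain ⟨s, hs, hgs⟩ := h
    refine ⟨((M - 1) / (g ⬝ᵥ s)) • s, ?_⟩
    rw [hf]
    rw [Matrix.mulVec_smul, hs, smul_zero, dotProduct_zero, mul_zero, zero_add,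
      dotProduct_smul, smul_eq_mul, div_mul_cancel₀ _ hgs]
    linarith
end
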